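/- Suppose the Poincaré inequality holds with finite constant c: for every F ∈ 𝓕, ∫_ℝ (F(x) − m̄(F))² dm(x) ≤ c·∫_ℝ (dF/dS)² dS. Let a ∈ ℝ be such that m((−∞,a]) > 0. Then the Hardy inequality over (a,∞) holds with the finite constant c / (1 − m((a,∞))/m(ℝ)): for every F ∈ 𝓕, ∫_{(a,∞)} (F(x) − F(a))² dm(x) ≤ (c / (1 − m((a,∞))/m(ℝ))) · ∫_{(a,∞)} (dF/dS)² dS. -/

import Mathlib

open MeasureTheory Set
open scoped ENNReal

/-- If the Poincaré inequality holds with finite constant `c`, and `a ∈ ℝ` is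
such that `m((−∞,a]) > 0`, then the Hardy inequality over `(a,∞)` holds with the finite
constant `c / (1 − m((a,∞))/m(ℝ))`. -/
theorem hardy_from_poincare
    (S : ℝ → ℝ) (hScont : Continuous S) (hSmono : StrictMono S)
    (hStop : Filter.Tendsto S Filter.atTop Filter.atTop)
    (hSbot : Filter.Tendsto S Filter.atBot Filter.atBot)
    (μS : Measure ℝ)
    (hμS : ∀ c d : ℝ, c ≤ d → μS (Ioc c d) = ENNReal.ofReal (S d - S c))
    (m : Measure ℝ) [IsFiniteMeasure m] (hm : m univ ≠ 0)
    (c : ℝ)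
    (hPoincare : ∀ F f : ℝ → ℝ, MemLp F 2 m → Integrable f μS → MemLp f 2 μS →
      (∀ x y : ℝ, x < y → F y - F x = ∫ t in Ioc x y, f t ∂μS) →
      ∫⁻ x, ENNReal.ofReal ((F x - (m univ).toReal⁻¹ * ∫ y, F y ∂m) ^ 2) ∂m ≤
        ENNReal.ofReal c * ∫⁻ t, ENNReal.ofReal (f t ^ 2) ∂μS)
    (a : ℝ) (ha : 0 < m (Iic a)) :
    ∀ F f : ℝ → ℝ, MemLp F 2 m → Integrable f μS → MemLp f 2 μS →
      (∀ x y : ℝ, x < y → F y - F x = ∫ t in Ioc x y, f t ∂μS) →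
      ∫⁻ x in Ioi a, ENNReal.ofReal ((F x - F a) ^ 2) ∂m ≤
        ENNReal.ofReal (c / (1 - (m (Ioi a)).toReal / (m univ).toReal)) *
          ∫⁻ t in Ioi a, ENNReal.ofReal (f t ^ 2) ∂μS := by
  intro F f hF2 hfInt hf2 hFTC
  by_cases hP0 : m (Ioi a) = 0
  · rw [setLIntegral_measure_zero _ _ hP0]
    exact zero_le
  -- notation
  set M : ℝ := (m univ).toReal with hM
  set P : ℝ := (m (Ioi a)).toReal with hPdef
  set Q : ℝ := (m (Iic a)).toReal with hQdef
  have hQpos : 0 < Q := ENNReal.toReal_pos ha.ne' (measure_ne_top m _)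
  have hPpos : 0 < P := ENNReal.toReal_pos hP0 (measure_ne_top m _)
  have hsplit : m (Iic a) + m (Ioi a) = m univ := by
    have := measure_add_measure_compl (μ := m) (measurableSet_Iic (a := a))
    rwa [compl_Iic] at this
  have hMQP : M = Q + P := by
    rw [hM, ← hsplit, ENNReal.toReal_add (measure_ne_top m _) (measure_ne_top m _)]
  have hMpos : 0 < M := by rw [hMQP]; linarith
  -- the truncated function
  set G : ℝ → ℝ := (Ioi a).indicator (fun x => F x - F a) with hGdef
  set g : ℝ → ℝ := (Ioi a).indicator f with hgdef
  have hG2 : MemLp G 2 m :=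
    MemLp.indicator measurableSet_Ioi (hF2.sub (memLp_const (F a)))
  have hgInt : Integrable g μS := hfInt.indicator measurableSet_Ioi
  have hg2 : MemLp g 2 μS := MemLp.indicator measurableSet_Ioi hf2
  have hGFTC : ∀ x y : ℝ, x < y → G y - G x = ∫ t in Ioc x y, g t ∂μS := by
    intro x y hxy
    have key : ∫ t in Ioc x y, g t ∂μS = ∫ t in Ioc x y ∩ Ioi a, f t ∂μS := by
      rw [hgdef]; exact setIntegral_indicator measurableSet_Ioi
    rcases le_or_gt y a with hya | hay
    · have hGy : G y = 0 := indicator_of_notMem (by simpa using hya) _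
      have hGx : G x = 0 := indicator_of_notMem (by simp; linarith) _
      have hempty : Ioc x y ∩ Ioi a = ∅ := by
        ext t
        simp only [mem_inter_iff, mem_Ioc, mem_Ioi, mem_empty_iff_false, iff_false, not_and]
        rintro ⟨h1, h2⟩ h3; linarith
      rw [key, hempty, hGy, hGx]
      simp
    · rcases le_or_gt x a with hxa | hax
      · have hGx : G x = 0 := indicator_of_notMem (by simp; linarith) _
        have hGy : G y = F y - F a := indicator_of_mem hay _
        have hset : Ioc x y ∩ Ioi a = Ioc a y := by
          ext t
          simp only [mem_inter_iff, mem_Ioc, mem_Ioi]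
          constructor
          · rintro ⟨⟨h1, h2⟩, h3⟩; exact ⟨h3, h2⟩
          · rintro ⟨h1, h2⟩; exact ⟨⟨lt_of_le_of_lt hxa h1, h2⟩, h1⟩
        rw [key, hset, hGx, hGy, sub_zero]
        exact hFTC a y hay
      · have hGx : G x = F x - F a := indicator_of_mem hax _
        have hGy : G y = F y - F a := indicator_of_mem (lt_trans hax hxy) _
        have hset : Ioc x y ∩ Ioi a = Ioc x y :=
          inter_eq_left.mpr (fun t ht => lt_trans hax ht.1)
        rw [key, hset, hGx, hGy, ← hFTC x y hxy]
        ring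
  -- Poincaré applied to G
  have hPoin := hPoincare G g hG2 hgInt hg2 hGFTC
  -- integrability facts
  have hGint : Integrable G m := hG2.integrable one_le_two
  have hGsq : Integrable (fun x => G x ^ 2) m := hG2.integrable_sq
  set gbar : ℝ := M⁻¹ * ∫ y, G y ∂m with hgbar
  have hVint : Integrable (fun x => (G x - gbar) ^ 2) m :=
    (hG2.sub (memLp_const gbar)).integrable_sq
  set T : ℝ := ∫ x in Ioi a, G x ∂m with hT
  set A : ℝ := ∫ x in Ioi a, G x ^ 2 ∂m with hA
  set V : ℝ := ∫ x, (G x - gbar) ^ 2 ∂m with hV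
  -- G vanishes on Iic a
  have hGzero : ∀ x ∈ Iic a, G x = 0 := fun x hx =>
    indicator_of_notMem (by simpa using hx) _
  -- total integral of G equals integral over Ioi a
  have hGtot : ∫ x, G x ∂m = T := by
    rw [← integral_add_compl measurableSet_Iic hGint, compl_Iic]
    have h0 : ∫ x in Iic a, G x ∂m = 0 := by
      rw [setIntegral_congr_fun measurableSet_Iic (fun x hx => hGzero x hx)]
      simp
    rw [h0, zero_add]
  have hgbarT : gbar = M⁻¹ * T := by rw [hgbar, hGtot]
  -- expansion helper
  have hexpand : ∀ t : ℝ, ∫ x in Ioi a, (G x - t) ^ 2 ∂m = A - 2 * t * T + t ^ 2 * P := by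
    intro t
    have h1 : ∀ x : ℝ, (G x - t) ^ 2 = G x ^ 2 - 2 * t * G x + t ^ 2 := fun x => by ring
    simp_rw [h1]
    have hi1 : Integrable (fun x => G x ^ 2 - 2 * t * G x) (m.restrict (Ioi a)) :=
      (hGsq.restrict (s := Ioi a)).sub ((hGint.restrict (s := Ioi a)).const_mul _)
    have hi2 : Integrable (fun x => 2 * t * G x) (m.restrict (Ioi a)) :=
      (hGint.restrict (s := Ioi a)).const_mul _
    rw [integral_add hi1 (integrable_const _),
      integral_sub (hGsq.restrict (s := Ioi a)) hi2,
      integral_const_mul, setIntegral_const, smul_eq_mul, measureReal_def]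
    rw [← hT, ← hA, ← hPdef]
    ring
  -- Cauchy–Schwarz via the quadratic
  have hCS : T ^ 2 ≤ P * A := by
    have h0 : (0:ℝ) ≤ ∫ x in Ioi a, (G x - T / P) ^ 2 ∂m :=
      integral_nonneg fun x => sq_nonneg _
    rw [hexpand (T / P)] at h0
    have h1 : A - 2 * (T / P) * T + (T / P) ^ 2 * P = A - T ^ 2 / P := by
      field_simp; ring
    rw [h1] at h0
    have h2 : T ^ 2 / P ≤ A := by linarith
    have := (div_le_iff₀ hPpos).mp h2
    linarith
  -- decomposition of the variance
  have hVeq : V = Q * gbar ^ 2 + (A - 2 * gbar * T + gbar ^ 2 * P) := by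
    rw [hV, ← integral_add_compl measurableSet_Iic hVint, compl_Iic]
    have h1 : ∫ x in Iic a, (G x - gbar) ^ 2 ∂m = Q * gbar ^ 2 := by
      have he : EqOn (fun x => (G x - gbar) ^ 2) (fun _ => gbar ^ 2) (Iic a) :=
        fun x hx => by simp only []; rw [hGzero x hx]; ring
      rw [setIntegral_congr_fun measurableSet_Iic he, setIntegral_const, smul_eq_mul, measureReal_def, ← hQdef]
    rw [h1, hexpand gbar]
  -- the key real inequality
  have hkey : A ≤ M / Q * V := by
    have hgM : gbar * M = T := by
      rw [hgbarT]
      field_simp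
    have hMV : M * V = M * A - T ^ 2 := by
      linear_combination M * hVeq + (gbar * M - T) * hgM - gbar ^ 2 * M * hMQP
    rw [div_mul_eq_mul_div, le_div_iff₀ hQpos]
    have hQA : M * A = Q * A + P * A := by rw [hMQP]; ring
    linarith [hCS, hMV, hQA]
  -- convert the goal's LHS to a real integral
  have hFsqInt : Integrable (fun x => (F x - F a) ^ 2) (m.restrict (Ioi a)) :=
    ((hF2.sub (memLp_const (F a))).integrable_sq).restrict
  have hLHS : ∫⁻ x in Ioi a, ENNReal.ofReal ((F x - F a) ^ 2) ∂m = ENNReal.ofReal A := by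
    rw [← ofReal_integral_eq_lintegral_ofReal hFsqInt
      (Filter.Eventually.of_forall fun x => sq_nonneg _)]
    congr 1
    rw [hA]
    exact setIntegral_congr_fun measurableSet_Ioi
      (fun x hx => by rw [hGdef, indicator_of_mem hx])
  -- convert Poincaré's sides
  have hVlin : ∫⁻ x, ENNReal.ofReal ((G x - gbar) ^ 2) ∂m = ENNReal.ofReal V :=
    (ofReal_integral_eq_lintegral_ofReal hVint
      (Filter.Eventually.of_forall fun x => sq_nonneg _)).symm
  have hglin : ∫⁻ t, ENNReal.ofReal (g t ^ 2) ∂μS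
      = ∫⁻ t in Ioi a, ENNReal.ofReal (f t ^ 2) ∂μS := by
    rw [← lintegral_indicator measurableSet_Ioi]
    congr 1
    funext t
    by_cases ht : t ∈ Ioi a
    · rw [indicator_of_mem ht, hgdef, indicator_of_mem ht]
    · rw [indicator_of_notMem ht, hgdef, indicator_of_notMem ht]
      simp
  rw [hgbar] at hVlin
  rw [hVlin, hglin] at hPoin
  -- the constant
  have hMQnn : (0:ℝ) ≤ M / Q := le_of_lt (div_pos hMpos hQpos)
  have hconst : c / (1 - P / M) = M / Q * c := by
    have h1 : 1 - P / M = Q / M := by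
      field_simp
      linarith [hMQP]
    rw [h1, div_div_eq_mul_div]
    ring
  rw [hLHS, hconst, ENNReal.ofReal_mul hMQnn]
  calc ENNReal.ofReal A ≤ ENNReal.ofReal (M / Q * V) :=
        ENNReal.ofReal_le_ofReal hkey
    _ = ENNReal.ofReal (M / Q) * ENNReal.ofReal V := ENNReal.ofReal_mul hMQnn
    _ ≤ ENNReal.ofReal (M / Q) *
        (ENNReal.ofReal c * ∫⁻ t in Ioi a, ENNReal.ofReal (f t ^ 2) ∂μS) :=
        mul_le_mul_right hPoin _
    _ = ENNReal.ofReal (M / Q) * ENNReal.ofReal c *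
        ∫⁻ t in Ioi a, ENNReal.ofReal (f t ^ 2) ∂μS := by rw [mul_assoc]
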